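/- Let N, M ≥ 0 be integers, g ∈ ℂ with g ≠ 0, and μ = (μ_1 ≥ … ≥ μ_ℓ > 0) a partition. Then the polynomial P(z,w) = p_μ^{N,M}(z,w;g) in the variables z_1,…,z_N,w_1,…,w_M satisfies the quasi-invariance conditions: for every 1 ≤ j ≤ N and 1 ≤ k ≤ M and every point (z,w) ∈ ℂ^{N+M} with z_j = w_k, one has (∂P/∂z_j + g·∂P/∂w_k)(z,w) = 0. -/

import Mathlib

open Finset

/-- The product of deformed Newton sums
`p_μ^{N,M}(z,w;g) = ∏_i (∑_j z_j^{μ_i} − (1/g) ∑_k w_k^{μ_i})`. -/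
noncomputable def pMu (N M ℓ : ℕ) (g : ℂ) (μ : Fin ℓ → ℕ)
    (z : Fin N → ℂ) (w : Fin M → ℂ) : ℂ :=
  ∏ i : Fin ℓ, ((∑ j : Fin N, z j ^ μ i) - (1 / g) * ∑ k : Fin M, w k ^ μ i)

lemma sum_update_pow_hasDerivAt {n : ℕ} (v : Fin n → ℂ) (j : Fin n) (m : ℕ) :
    HasDerivAt (fun t : ℂ => ∑ j' : Fin n, Function.update v j t j' ^ m)
      ((m : ℂ) * v j ^ (m - 1)) (v j) := by
  have H : ∀ j' : Fin n, j' ∈ Finset.univ →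
      HasDerivAt (fun t : ℂ => Function.update v j t j' ^ m)
        (if j' = j then (m : ℂ) * v j ^ (m - 1) else 0) (v j) := by
    intro j' _
    by_cases hj : j' = j
    · subst hj
      simpa using (hasDerivAt_pow m (v j')).congr_of_eventuallyEq
        (by filter_upwards with t; simp)
    · simp only [if_neg hj]
      simpa using (hasDerivAt_const (v j) (v j' ^ m)).congr_of_eventuallyEq
        (by filter_upwards with t; simp [Function.update_of_ne hj])
  have := HasDerivAt.fun_sum H
  simpa using this

theorem pMu_quasi_invariance (N M ℓ : ℕ) (g : ℂ) (hg : g ≠ 0)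
    (μ : Fin ℓ → ℕ) (hdec : ∀ i j : Fin ℓ, i ≤ j → μ j ≤ μ i) (hpos : ∀ i, 0 < μ i)
    (j : Fin N) (k : Fin M) (z : Fin N → ℂ) (w : Fin M → ℂ) (h : z j = w k) :
    deriv (fun t : ℂ => pMu N M ℓ g μ (Function.update z j t) w) (z j)
      + g * deriv (fun t : ℂ => pMu N M ℓ g μ z (Function.update w k t)) (w k) = 0 := by
  -- factors
  set fZ : Fin ℓ → ℂ → ℂ := fun i t =>
    (∑ j' : Fin N, Function.update z j t j' ^ μ i) - (1 / g) * ∑ k' : Fin M, w k' ^ μ i with hfZ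
  set fW : Fin ℓ → ℂ → ℂ := fun i t =>
    (∑ j' : Fin N, z j' ^ μ i) - (1 / g) * ∑ k' : Fin M, Function.update w k t k' ^ μ i with hfW
  have hZder : ∀ i : Fin ℓ, i ∈ Finset.univ →
      HasDerivAt (fZ i) ((μ i : ℂ) * z j ^ (μ i - 1)) (z j) := fun i _ =>
    (sum_update_pow_hasDerivAt z j (μ i)).sub_const _
  have hWder : ∀ i : Fin ℓ, i ∈ Finset.univ →
      HasDerivAt (fW i) (-((1 / g) * ((μ i : ℂ) * w k ^ (μ i - 1)))) (w k) := fun i _ => by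
    have := ((sum_update_pow_hasDerivAt w k (μ i)).const_mul (1 / g)).const_sub
      (∑ j' : Fin N, z j' ^ μ i)
    simpa [hfW] using this
  have HZ := HasDerivAt.fun_finsetProd hZder
  have HW := HasDerivAt.fun_finsetProd hWder
  have eZ : (fun t : ℂ => pMu N M ℓ g μ (Function.update z j t) w) = (∏ i : Fin ℓ, fZ i ·) := by
    funext t; simp [pMu, hfZ]
  have eW : (fun t : ℂ => pMu N M ℓ g μ z (Function.update w k t)) = (∏ i : Fin ℓ, fW i ·) := by
    funext t; simp [pMu, hfW]
  rw [eZ, eW, HZ.deriv, HW.deriv]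
  have hval : ∀ i : Fin ℓ, fZ i (z j) = fW i (w k) := by
    intro i
    simp [hfZ, hfW, Function.update_eq_self]
  rw [Finset.mul_sum, ← Finset.sum_add_distrib]
  refine Finset.sum_eq_zero fun i _ => ?_
  have hE : ∀ i' : Fin ℓ, i' ∈ Finset.univ.erase i → fZ i' (z j) = fW i' (w k) :=
    fun i' _ => hval i'
  rw [Finset.prod_congr rfl hE]
  rw [smul_eq_mul, smul_eq_mul]
  have : g * ((∏ j' ∈ Finset.univ.erase i, fW j' (w k)) *
      -((1 / g) * ((μ i : ℂ) * w k ^ (μ i - 1))))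
      = -((∏ j' ∈ Finset.univ.erase i, fW j' (w k)) * ((μ i : ℂ) * w k ^ (μ i - 1))) := by
    field_simp
  rw [this, h]
  ring
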